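/- Let V : ℝ^n → ℝ be C², strongly convex with parameter μ > 0 on a ball B(θ₀, r), with ∥∇V(θ₀)∥ ≤ g and μr² − gr > V(θ₀) ≥ 0 where V ≥ 0 everywhere. Then the solution of the negative gradient flow θ'(t) = −∇V(θ(t)) starting at θ(0) = θ₀ remains in B(θ₀, r) for all t ≥ 0. -/

import Mathlib

noncomputable section
open scoped RealInnerProductSpace

theorem grad_mono {n : ℕ} (V : EuclideanSpace ℝ (Fin n) → ℝ)
    (θ₀ : EuclideanSpace ℝ (Fin n)) (r μ : ℝ)
    (hV : ContDiff ℝ 2 V)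
    (hHess : ∀ θ ∈ Metric.closedBall θ₀ r, ∀ v : EuclideanSpace ℝ (Fin n),
      μ * ‖v‖ ^ 2 ≤ ⟪v, fderiv ℝ (gradient V) θ v⟫)
    (θ : EuclideanSpace ℝ (Fin n)) (hθ : θ ∈ Metric.closedBall θ₀ r) :
    μ * ‖θ - θ₀‖ ^ 2 ≤ ⟪θ - θ₀, gradient V θ - gradient V θ₀⟫ := by
  have hG : ContDiff ℝ 1 (gradient V) := by
    have : (gradient V) = fun x => (InnerProductSpace.toDual ℝ _).symm (fderiv ℝ V x) := rfl
    rw [this]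
    exact (InnerProductSpace.toDual ℝ _).symm.contDiff.comp (hV.fderiv_right (by norm_num))
  set u := θ - θ₀ with hu
  set p : ℝ → EuclideanSpace ℝ (Fin n) := fun s => θ₀ + s • u with hp
  have hpball : ∀ s ∈ Set.Icc (0:ℝ) 1, p s ∈ Metric.closedBall θ₀ r := by
    intro s hs
    simp only [Metric.mem_closedBall, dist_eq_norm, hp, add_sub_cancel_left, norm_smul,
      Real.norm_eq_abs, abs_of_nonneg hs.1]
    have hur : ‖u‖ ≤ r := by
      simpa [hu, dist_eq_norm] using hθ
    calc s * ‖u‖ ≤ 1 * ‖u‖ := mul_le_mul_of_nonneg_right hs.2 (norm_nonneg _)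
      _ ≤ r := by simpa using hur
  set h : ℝ → ℝ := fun s => ⟪u, gradient V (p s)⟫ with hh
  have hderiv : ∀ s : ℝ, HasDerivAt h ⟪u, fderiv ℝ (gradient V) (p s) u⟫ s := by
    intro s
    have hps : HasDerivAt p u s := by
      simpa [hp] using ((hasDerivAt_id s).smul_const u).const_add θ₀
    have hGd : HasFDerivAt (gradient V) (fderiv ℝ (gradient V) (p s)) (p s) :=
      (hG.differentiable (by norm_num) (p s)).hasFDerivAt
    have := hGd.comp_hasDerivAt s hps
    have h2 := (hasDerivAt_const s u).inner ℝ this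
    simpa [hh] using h2
  obtain ⟨c, hc, hceq⟩ := exists_hasDerivAt_eq_slope h
      (fun s => ⟪u, fderiv ℝ (gradient V) (p s) u⟫) (by norm_num : (0:ℝ) < 1)
      (fun s _ => (hderiv s).continuousAt.continuousWithinAt)
      (fun s _ => hderiv s)
  have hbound := hHess (p c) (hpball c (Set.mem_Icc_of_Ioo hc)) u
  rw [hceq] at hbound
  have h1 : h 1 = ⟪u, gradient V θ⟫ := by simp [hh, hp, hu]
  have h0 : h 0 = ⟪u, gradient V θ₀⟫ := by simp [hh, hp]
  rw [h1, h0] at hbound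
  simpa [inner_sub_right] using hbound


/-- If `V` is C², nonnegative, strongly convex with parameter `μ` on the closed
ball `B(θ₀, r)` (i.e. `∇²V ⪰ μI` there), `‖∇V(θ₀)‖ ≤ g` and
`μr² − gr > V(θ₀) ≥ 0`, then the negative gradient flow started at `θ₀` stays in
`B(θ₀, r)` for all `t ≥ 0`. -/
theorem stmt3 {n : ℕ} (V : EuclideanSpace ℝ (Fin n) → ℝ)
    (θ₀ : EuclideanSpace ℝ (Fin n)) (r μ g : ℝ)
    (hr : 0 < r) (hμ : 0 < μ) (hg : 0 ≤ g)
    (hV : ContDiff ℝ 2 V)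
    (hVnonneg : ∀ x, 0 ≤ V x)
    (hHess : ∀ θ ∈ Metric.closedBall θ₀ r, ∀ v : EuclideanSpace ℝ (Fin n),
      μ * ‖v‖ ^ 2 ≤ ⟪v, fderiv ℝ (gradient V) θ v⟫)
    (hgrad : ‖gradient V θ₀‖ ≤ g)
    (hcond : μ * r ^ 2 - g * r > V θ₀)
    (θtraj : ℝ → EuclideanSpace ℝ (Fin n))
    (hinit : θtraj 0 = θ₀)
    (hflow : ∀ t, 0 ≤ t → HasDerivAt θtraj (-(gradient V (θtraj t))) t) :
    ∀ t, 0 ≤ t → θtraj t ∈ Metric.closedBall θ₀ r := by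
  by_contra hcon
  push_neg at hcon
  obtain ⟨t₁, ht₁0, ht₁⟩ := hcon
  set f : ℝ → ℝ := fun t => ‖θtraj t - θ₀‖ with hf
  have hcont : ∀ t : ℝ, 0 ≤ t → ContinuousAt f t := fun t ht =>
    (continuous_norm.continuousAt).comp (((hflow t ht).continuousAt).sub continuousAt_const)
  have ht₁r : r < f t₁ := by
    simpa [hf, dist_eq_norm, Metric.mem_closedBall, not_le] using ht₁
  set S : Set ℝ := {t | 0 ≤ t ∧ r ≤ f t} with hS
  have hSne : S.Nonempty := ⟨t₁, ht₁0, le_of_lt ht₁r⟩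
  have hSbdd : BddBelow S := ⟨0, fun t ht => ht.1⟩
  have hSclosed : IsClosed S := by
    rw [← isOpen_compl_iff]
    rw [isOpen_iff_mem_nhds]
    intro t ht
    simp only [Set.mem_compl_iff, hS, Set.mem_setOf_eq, not_and, not_le] at ht
    rcases lt_or_ge t 0 with h | h
    · exact Filter.eventually_iff_exists_mem.mpr ⟨Set.Iio 0, Iio_mem_nhds h,
        fun s hs hs' => absurd hs'.1 (not_le.mpr hs)⟩
    · have hft := ht h
      have : ∀ᶠ s in nhds t, f s < r := (hcont t h).eventually_lt_const hft
      filter_upwards [this] with s hs hs'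
      exact absurd hs'.2 (not_le.mpr hs)
  set T := sInf S with hT
  have hTS : T ∈ S := hSclosed.csInf_mem hSne hSbdd
  have hT0 : 0 ≤ T := hTS.1
  have hTr : r ≤ f T := hTS.2
  have hTpos : 0 < T := by
    rcases eq_or_lt_of_le hT0 with h | h
    · exfalso
      have : f 0 = 0 := by simp [hf, hinit]
      rw [← h] at hTr
      linarith
    · exact h
  have hbefore : ∀ t, 0 ≤ t → t < T → f t < r := by
    intro t ht0 htT
    by_contra hh
    push_neg at hh
    exact absurd (csInf_le hSbdd ⟨ht0, hh⟩) (not_le.mpr htT)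
  have hfT : f T = r := by
    refine le_antisymm ?_ hTr
    have htend : Filter.Tendsto f (nhdsWithin T (Set.Iio T)) (nhds (f T)) :=
      ((hcont T hT0).continuousWithinAt).tendsto
    refine le_of_tendsto htend ?_
    filter_upwards [Ioo_mem_nhdsLT_of_mem (Set.mem_Ioc.mpr ⟨hTpos, le_refl T⟩)] with t ht
    exact le_of_lt (hbefore t (le_of_lt ht.1) ht.2)
  -- trajectory in ball up to T
  have hball : θtraj T ∈ Metric.closedBall θ₀ r := by
    simp [Metric.mem_closedBall, dist_eq_norm, ← hfT]
    exact le_rfl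
  set φ : ℝ → ℝ := fun t => ⟪θtraj t - θ₀, θtraj t - θ₀⟫ with hφ
  have hφnorm : ∀ t, φ t = f t ^ 2 := fun t => by
    show ⟪θtraj t - θ₀, θtraj t - θ₀⟫ = ‖θtraj t - θ₀‖ ^ 2
    rw [real_inner_self_eq_norm_sq]
  set D : ℝ := 2 * ⟪θtraj T - θ₀, -(gradient V (θtraj T))⟫ with hD
  have hφd : HasDerivAt φ D T := by
    have hd : HasDerivAt (fun t => θtraj t - θ₀) (-(gradient V (θtraj T))) T :=
      (hflow T hT0).sub_const θ₀
    have := hd.inner ℝ hd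
    refine this.congr_deriv ?_
    rw [hD, real_inner_comm (-(gradient V (θtraj T))) (θtraj T - θ₀)]
    ring
  -- D ≥ 0 from first exit
  have hDnonneg : 0 ≤ D := by
    have hd := hφd
    rw [hasDerivAt_iff_tendsto_slope] at hd
    have hmono : nhdsWithin T (Set.Iio T) ≤ nhdsWithin T {T}ᶜ :=
      nhdsWithin_mono T (fun x hx => ne_of_lt hx)
    have hd' := hd.mono_left hmono
    refine ge_of_tendsto hd' ?_
    filter_upwards [Ioo_mem_nhdsLT_of_mem (Set.mem_Ioc.mpr ⟨hTpos, le_refl T⟩)] with t ht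
    have hφt : φ t ≤ φ T := by
      rw [hφnorm, hφnorm, hfT]
      have h1 : f t < r := hbefore t (le_of_lt ht.1) ht.2
      have := norm_nonneg (θtraj t - θ₀)
      nlinarith [this]
    rw [slope_def_field]
    rw [div_nonneg_iff]
    right
    constructor
    · linarith
    · linarith [ht.2]
  -- D < 0 from strong convexity
  have hDneg : D ≤ -2 * (μ * r ^ 2 - g * r) := by
    have hmon := grad_mono V θ₀ r μ hV hHess (θtraj T) hball
    have hnrm : ‖θtraj T - θ₀‖ = r := hfT
    rw [hnrm] at hmon
    have hinner : ⟪θtraj T - θ₀, gradient V θ₀⟫ ≥ -(r * g) := by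
      have h1 := abs_real_inner_le_norm (θtraj T - θ₀) (gradient V θ₀)
      rw [hnrm] at h1
      have h2 : r * ‖gradient V θ₀‖ ≤ r * g := by
        exact mul_le_mul_of_nonneg_left hgrad (le_of_lt hr)
      have := neg_abs_le ⟪θtraj T - θ₀, gradient V θ₀⟫
      linarith
    have hexp : ⟪θtraj T - θ₀, gradient V (θtraj T)⟫ ≥ μ * r ^ 2 - r * g := by
      have : ⟪θtraj T - θ₀, gradient V (θtraj T)⟫
          = ⟪θtraj T - θ₀, gradient V (θtraj T) - gradient V θ₀⟫
            + ⟪θtraj T - θ₀, gradient V θ₀⟫ := by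
        rw [inner_sub_right]; ring
      rw [this]
      linarith
    rw [hD]
    rw [inner_neg_right]
    nlinarith
  have hV0 : 0 ≤ V θ₀ := hVnonneg θ₀
  linarith
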